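/- Let x, y ∈ 𝔹² with x = ty for some real t < 0 and |x| ≤ |y|. Then τ̃_{𝔹²}(x, y) = log(1 + |x-y| / √((1+|x|)(1-|y|))). -/

import Mathlib

/-- The scale invariant Cassinian metric
`τ̃_D(x,y) = log(1 + sup_{p ∈ ∂D} |x-y|/√(|x-p||y-p|))`. -/
noncomputable def scTau {E : Type*} [NormedAddCommGroup E] (D : Set E) (x y : E) : ℝ :=
  Real.log (1 + ⨆ p : frontier D, ‖x - y‖ / Real.sqrt (‖x - (p : E)‖ * ‖y - (p : E)‖))

theorem stmt6 (x y : EuclideanSpace ℝ (Fin 2))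
    (hx : x ∈ Metric.ball (0 : EuclideanSpace ℝ (Fin 2)) 1)
    (hy : y ∈ Metric.ball (0 : EuclideanSpace ℝ (Fin 2)) 1)
    (t : ℝ) (ht : t < 0) (hxy : x = t • y) (hle : ‖x‖ ≤ ‖y‖) :
    scTau (Metric.ball (0 : EuclideanSpace ℝ (Fin 2)) 1) x y
      = Real.log (1 + ‖x - y‖ / Real.sqrt ((1 + ‖x‖) * (1 - ‖y‖))) := by
  have hfr : frontier (Metric.ball (0 : EuclideanSpace ℝ (Fin 2)) 1)
      = Metric.sphere (0 : EuclideanSpace ℝ (Fin 2)) 1 := frontier_ball 0 one_ne_zero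
  have hsne : (Metric.sphere (0 : EuclideanSpace ℝ (Fin 2)) 1).Nonempty :=
    NormedSpace.sphere_nonempty.mpr zero_le_one
  haveI hne : Nonempty (Metric.sphere (0 : EuclideanSpace ℝ (Fin 2)) 1) := hsne.to_subtype
  rw [scTau, hfr]
  have hb1 : ‖y‖ < 1 := mem_ball_zero_iff.mp hy
  rcases eq_or_ne y 0 with hy0 | hy0
  · simp [hxy, hy0, ciSup_const]
  · have hb0 : 0 < ‖y‖ := norm_pos_iff.mpr hy0
    set u : EuclideanSpace ℝ (Fin 2) := (‖y‖⁻¹ : ℝ) • y with hu_def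
    have hu : ‖u‖ = 1 := norm_smul_inv_norm hy0
    have hu' : u ∈ Metric.sphere (0 : EuclideanSpace ℝ (Fin 2)) 1 :=
      mem_sphere_zero_iff_norm.mpr hu
    have hyu : y = ‖y‖ • u := by
      rw [hu_def, smul_smul, mul_inv_cancel₀ hb0.ne', one_smul]
    have hax : ‖x‖ = -t * ‖y‖ := by
      rw [hxy, norm_smul, Real.norm_eq_abs, abs_of_neg ht]
    have hts : t = -‖x‖ * ‖y‖⁻¹ := by
      rw [hax]; field_simp
    have hxu : x = (-‖x‖) • u := by
      rw [hu_def, smul_smul, ← hts]; exact hxy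
    -- key inequality
    have key : ∀ p : EuclideanSpace ℝ (Fin 2), ‖p‖ = 1 →
        (1 + ‖x‖) * (1 - ‖y‖) ≤ ‖x - p‖ * ‖y - p‖ := by
      intro p hp
      set c : ℝ := inner ℝ u p with hc
      have hcle : |c| ≤ 1 := by
        have := abs_real_inner_le_norm u p
        rwa [hu, hp, one_mul] at this
      obtain ⟨h2c, h1c⟩ := abs_le.mp hcle
      have hip_x : (inner ℝ x p : ℝ) = -‖x‖ * c := by
        conv_lhs => rw [hxu]
        rw [real_inner_smul_left]
      have hip_y : (inner ℝ y p : ℝ) = ‖y‖ * c := by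
        conv_lhs => rw [hyu]
        rw [real_inner_smul_left]
      have h1 : ‖x - p‖ ^ 2 = ‖x‖ ^ 2 + 2 * ‖x‖ * c + 1 := by
        rw [norm_sub_sq_real, hip_x, hp]; ring
      have h2 : ‖y - p‖ ^ 2 = ‖y‖ ^ 2 - 2 * ‖y‖ * c + 1 := by
        rw [norm_sub_sq_real, hip_y, hp]; ring
      have hA : (0:ℝ) ≤ (1 + ‖x‖) * (1 - ‖y‖) :=
        mul_nonneg (by linarith [norm_nonneg x]) (by linarith)
      have hB : (0:ℝ) ≤ ‖x - p‖ * ‖y - p‖ :=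
        mul_nonneg (norm_nonneg _) (norm_nonneg _)
      have hsq : ((1 + ‖x‖) * (1 - ‖y‖)) ^ 2 ≤ (‖x - p‖ * ‖y - p‖) ^ 2 := by
        rw [show (‖x - p‖ * ‖y - p‖) ^ 2 = ‖x - p‖ ^ 2 * ‖y - p‖ ^ 2 from mul_pow _ _ _,
          h1, h2]
        have ha0 : (0:ℝ) ≤ ‖x‖ := norm_nonneg x
        nlinarith [mul_nonneg (mul_nonneg (mul_nonneg ha0 hb0.le) (by linarith : (0:ℝ) ≤ 1 - c))
            (by linarith : (0:ℝ) ≤ 1 + c),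
          mul_nonneg (mul_nonneg (by linarith : (0:ℝ) ≤ 1 - c)
            (by linarith : (0:ℝ) ≤ ‖y‖ - ‖x‖))
            (by nlinarith : (0:ℝ) ≤ 1 - ‖x‖ * ‖y‖)]
      calc (1 + ‖x‖) * (1 - ‖y‖) = Real.sqrt (((1 + ‖x‖) * (1 - ‖y‖)) ^ 2) :=
            (Real.sqrt_sq hA).symm
        _ ≤ Real.sqrt ((‖x - p‖ * ‖y - p‖) ^ 2) := Real.sqrt_le_sqrt hsq
        _ = ‖x - p‖ * ‖y - p‖ := Real.sqrt_sq hB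
    have hposM : (0:ℝ) < (1 + ‖x‖) * (1 - ‖y‖) :=
      mul_pos (by linarith [norm_nonneg x]) (by linarith)
    -- value at u
    have hvx : ‖x - u‖ = 1 + ‖x‖ := by
      have h1 : (-(‖x‖ + 1) : ℝ) • u = x - u := by
        rw [show (-(‖x‖ + 1) : ℝ) = -‖x‖ - 1 by ring, sub_smul, one_smul, ← hxu]
      rw [← h1, norm_smul, hu, mul_one, Real.norm_eq_abs, abs_of_nonpos (by
        have := norm_nonneg x; linarith), neg_neg]
      ring
    have hvy : ‖y - u‖ = 1 - ‖y‖ := by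
      have h1 : ((‖y‖ - 1) : ℝ) • u = y - u := by
        rw [sub_smul, one_smul, ← hyu]
      rw [← h1, norm_smul, hu, mul_one, Real.norm_eq_abs, abs_of_neg (by linarith)]
      ring
    have hub : ∀ p : Metric.sphere (0 : EuclideanSpace ℝ (Fin 2)) 1,
        ‖x - y‖ / Real.sqrt (‖x - (p : EuclideanSpace ℝ (Fin 2))‖ *
          ‖y - (p : EuclideanSpace ℝ (Fin 2))‖)
          ≤ ‖x - y‖ / Real.sqrt ((1 + ‖x‖) * (1 - ‖y‖)) := by
      intro p
      have hkp := key p (mem_sphere_zero_iff_norm.mp p.2)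
      gcongr
      all_goals first
        | exact norm_nonneg _
        | exact Real.sqrt_pos.mpr hposM
        | exact Real.sqrt_le_sqrt hkp
    have hsup : (⨆ p : Metric.sphere (0 : EuclideanSpace ℝ (Fin 2)) 1,
        ‖x - y‖ / Real.sqrt (‖x - (p : EuclideanSpace ℝ (Fin 2))‖ *
          ‖y - (p : EuclideanSpace ℝ (Fin 2))‖))
        = ‖x - y‖ / Real.sqrt ((1 + ‖x‖) * (1 - ‖y‖)) := by
      refine le_antisymm (ciSup_le hub) ?_
      have hval : ‖x - y‖ / Real.sqrt ((1 + ‖x‖) * (1 - ‖y‖))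
          = ‖x - y‖ / Real.sqrt (‖x - u‖ * ‖y - u‖) := by
        rw [hvx, hvy]
      rw [hval]
      exact le_ciSup ⟨‖x - y‖ / Real.sqrt ((1 + ‖x‖) * (1 - ‖y‖)), by
        rintro _ ⟨p, rfl⟩; exact hub p⟩ (⟨u, hu'⟩ : Metric.sphere (0 : EuclideanSpace ℝ (Fin 2)) 1)
    rw [hsup]
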